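/- Let e ∈ ℂ with e ≠ 0 and suppose h : ℤ × ℤ → ℂ[∂,λ], written h_{j,m}, satisfies h_{j,m}(∂+λ,μ)·e = e·h_{j,i+m}(∂,μ) in ℂ[∂,λ,μ] for all i, j, m ∈ ℤ, and also h_{j,m}(∂+λ,μ)·h_{i,j+m}(∂,λ) - h_{i,m}(∂+μ,λ)·h_{j,i+m}(∂,μ) = (λ-μ)·e for all i, j, m. Then a contradiction follows; i.e., no such families exist with e ≠ 0. -/
import Mathlib

/-- Case a = 1, b = 0 of Lemma 5.3: no families h_{j,m} can satisfy
h_{j,m}(∂+λ,μ)·e = e·h_{j,i+m}(∂,μ) and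
h_{j,m}(∂+λ,μ)h_{i,j+m}(∂,λ) - h_{i,m}(∂+μ,λ)h_{j,i+m}(∂,μ) = (λ-μ)e with e ≠ 0. -/
theorem stmt12 (e : ℂ) (he : e ≠ 0) (h : ℤ → ℤ → MvPolynomial (Fin 2) ℂ)
    (h1 : ∀ (i j m : ℤ) (x l μ : ℂ),
      MvPolynomial.eval ![x + l, μ] (h j m) * e
        = e * MvPolynomial.eval ![x, μ] (h j (i + m)))
    (h2 : ∀ (i j m : ℤ) (x l μ : ℂ),
      MvPolynomial.eval ![x + l, μ] (h j m) * MvPolynomial.eval ![x, l] (h i (j + m))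
        - MvPolynomial.eval ![x + μ, l] (h i m) * MvPolynomial.eval ![x, μ] (h j (i + m))
        = (l - μ) * e) :
    False := by
  have k := h1 0 0 0 0 1 0
  have k2 := h2 0 0 0 0 1 0
  simp only [zero_add, add_zero] at k k2
  have hk : MvPolynomial.eval ![(1:ℂ), 0] (h 0 0)
      = MvPolynomial.eval ![(0:ℂ), 0] (h 0 0) := by
    have := mul_right_cancel₀ he (k.trans (mul_comm e _))
    exact this
  rw [hk] at k2
  have : (0:ℂ) = (1 - 0) * e := by rw [← k2]; ring
  simp at this
  exact he this.symm
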